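/- Let w₁, …, w₅ be real numbers and T₁ = w₁·K₅⁺ + w₂·L₃⁺ + w₃·K₁⁺ + w₄·K₃⁻ + w₅·L₃⁻. If both the partial transpose of T₁ over the factors B₁ ⊗ B₂ and the partial transpose of I − T₁ over B₁ ⊗ B₂ are positive semidefinite, then 0 ≤ (10·w₁ + 6·w₂ − w₃)/12 ≤ 1 and 0 ≤ (w₃ + 2·(w₄ + w₅))/4 ≤ 1. -/

import Mathlib

open Matrix
open scoped Matrix Kronecker ComplexOrder

noncomputable section

/-- Index type of `ℂ² ⊗ ℂ²`. -/
abbrev Q : Type := Fin 2 × Fin 2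

/-- The standard basis vector `|ab⟩` of `ℂ² ⊗ ℂ²`. -/
def ket (a b : Fin 2) : Q → ℂ := fun p => if p = (a, b) then 1 else 0

/-- The Bell basis `φ⁰, φ¹, φ², φ³` of `ℂ² ⊗ ℂ²`. -/
def bell : Fin 4 → Q → ℂ
  | 0 => fun p => (ket 0 0 p + ket 1 1 p) / (Real.sqrt 2 : ℂ)
  | 1 => fun p => Complex.I * (ket 0 1 p + ket 1 0 p) / (Real.sqrt 2 : ℂ)
  | 2 => fun p => (-ket 0 1 p + ket 1 0 p) / (Real.sqrt 2 : ℂ)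
  | 3 => fun p => Complex.I * (ket 0 0 p - ket 1 1 p) / (Real.sqrt 2 : ℂ)

/-- The product basis `e^{jk} = φʲ ⊗ φᵏ` of `(ℂ²⊗ℂ²)⊗(ℂ²⊗ℂ²)`. -/
def e (j k : Fin 4) : Q × Q → ℂ := fun pq => bell j pq.1 * bell k pq.2

/-- Rank-one operator `|v⟩⟨v|`. -/
def outer {m : Type*} (v : m → ℂ) : Matrix m m ℂ := vecMulVec v (star v)

/-- Orthogonal projection onto
`span{e^{jk}+e^{kj} : 1≤j<k≤3} ∪ {e^{11}−e^{22}, e^{22}−e^{33}}`. -/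
def K5 : Matrix (Q × Q) (Q × Q) ℂ :=
  (1 / 2 : ℂ) • (outer (e 1 2 + e 2 1) + outer (e 2 3 + e 3 2) + outer (e 3 1 + e 1 3)) +
    (1 / 2 : ℂ) • outer (e 1 1 - e 2 2) +
    (1 / 6 : ℂ) • outer (e 1 1 + e 2 2 - (2 : ℂ) • e 3 3)

/-- Orthogonal projection onto `span{e^{11}+e^{22}+e^{33}}`. -/
def K1 : Matrix (Q × Q) (Q × Q) ℂ :=
  (1 / 3 : ℂ) • outer (e 1 1 + e 2 2 + e 3 3)

/-- Orthogonal projection onto `span{e^{jk}−e^{kj} : 1≤j<k≤3}`. -/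
def K3m : Matrix (Q × Q) (Q × Q) ℂ :=
  (1 / 2 : ℂ) • (outer (e 1 2 - e 2 1) + outer (e 2 3 - e 3 2) + outer (e 3 1 - e 1 3))

/-- Orthogonal projection onto `span{e^{00}}`. -/
def L1 : Matrix (Q × Q) (Q × Q) ℂ := outer (e 0 0)

/-- Orthogonal projection onto `span{e^{0j}+e^{j0} : j=1,2,3}`. -/
def L3p : Matrix (Q × Q) (Q × Q) ℂ :=
  (1 / 2 : ℂ) • (outer (e 0 1 + e 1 0) + outer (e 0 2 + e 2 0) + outer (e 0 3 + e 3 0))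

/-- Orthogonal projection onto `span{e^{0j}−e^{j0} : j=1,2,3}`. -/
def L3m : Matrix (Q × Q) (Q × Q) ℂ :=
  (1 / 2 : ℂ) • (outer (e 0 1 - e 1 0) + outer (e 0 2 - e 2 0) + outer (e 0 3 - e 3 0))

/-- The matrix elements `x_{jk} = ⟨φʲ, σ φᵏ⟩` of a state `σ` in the Bell basis. -/
def x (σ : Matrix Q Q ℂ) (j k : Fin 4) : ℂ := star (bell j) ⬝ᵥ σ.mulVec (bell k)

-- An element of `Q × Q = (A₁ × B₁) × (A₂ × B₂)` is the quadruple of indices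
-- `((a₁,b₁),(a₂,b₂))` of `(ℂ²)^{⊗4} = A₁ ⊗ B₁ ⊗ A₂ ⊗ B₂`;
-- the first sample is `A₁ ⊗ B₁` and the second sample is `A₂ ⊗ B₂`.

/-- Partial transpose over the second sample `A₂ ⊗ B₂`. -/
def ptSecond (X : Matrix (Q × Q) (Q × Q) ℂ) : Matrix (Q × Q) (Q × Q) ℂ :=
  Matrix.of fun r c => X (r.1, c.2) (c.1, r.2)

/-- Partial transpose over the factors `B₁ ⊗ B₂`. -/
def ptB (X : Matrix (Q × Q) (Q × Q) ℂ) : Matrix (Q × Q) (Q × Q) ℂ :=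
  Matrix.of fun r c =>
    X ((r.1.1, c.1.2), (r.2.1, c.2.2)) ((c.1.1, r.1.2), (c.2.1, r.2.2))

/-- Partial transpose over the single factor `B₂`. -/
def ptB2 (X : Matrix (Q × Q) (Q × Q) ℂ) : Matrix (Q × Q) (Q × Q) ℂ :=
  Matrix.of fun r c => X (r.1, (r.2.1, c.2.2)) (c.1, (c.2.1, r.2.2))

/-- sqrt-free Bell numerators -/
def bz : Fin 4 → Q → ℂ
  | 0 => fun p => ket 0 0 p + ket 1 1 p
  | 1 => fun p => Complex.I * (ket 0 1 p + ket 1 0 p)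
  | 2 => fun p => -ket 0 1 p + ket 1 0 p
  | 3 => fun p => Complex.I * (ket 0 0 p - ket 1 1 p)

lemma e_eq (j k : Fin 4) (pq : Q × Q) : e j k pq = bz j pq.1 * bz k pq.2 / 2 := by
  have hs : ((Real.sqrt 2 : ℝ) : ℂ) * ((Real.sqrt 2 : ℝ) : ℂ) = 2 := by
    norm_cast
    exact Real.mul_self_sqrt (by norm_num)
  have key : ∀ A B : ℂ, A / (Real.sqrt 2 : ℂ) * (B / (Real.sqrt 2 : ℂ)) = A * B / 2 := by
    intro A B
    rw [div_mul_div_comm, hs]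
  fin_cases j <;> fin_cases k <;> exact key _ _

lemma quadform (M : Matrix (Q × Q) (Q × Q) ℂ) (a b : Q × Q) :
    star ((Pi.single a (1:ℂ) : (Q × Q) → ℂ) - Pi.single b (1:ℂ)) ⬝ᵥ
      M.mulVec ((Pi.single a (1:ℂ) : (Q × Q) → ℂ) - Pi.single b (1:ℂ)) = M a a - M a b - M b a + M b b := by
  have hstar : star ((Pi.single a (1:ℂ) : (Q × Q) → ℂ) - Pi.single b (1:ℂ)) = (Pi.single a (1:ℂ) : (Q × Q) → ℂ) - Pi.single b (1:ℂ) := by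
    funext p
    simp [Pi.single_apply, apply_ite (star : ℂ → ℂ)]
  rw [hstar, mulVec_sub, mulVec_single, mulVec_single]
  simp [sub_dotProduct, single_dotProduct]
  ring

lemma ptB_one : ptB 1 = 1 := by
  ext r c
  simp only [ptB, Matrix.of_apply, Matrix.one_apply]
  obtain ⟨⟨r11, r12⟩, r21, r22⟩ := r
  obtain ⟨⟨c11, c12⟩, c21, c22⟩ := c
  simp only [Prod.mk.injEq, Prod.ext_iff]
  by_cases h1 : r11 = c11 <;> by_cases h2 : r12 = c12 <;> by_cases h3 : r21 = c21 <;>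
    by_cases h4 : r22 = c22 <;> simp [h1, h2, h3, h4] <;> tauto

lemma ptB_sub (X Y : Matrix (Q × Q) (Q × Q) ℂ) : ptB (X - Y) = ptB X - ptB Y := by
  ext r c
  simp [ptB]

set_option maxHeartbeats 4000000 in
/-- If the partial transposes over `B₁ ⊗ B₂` of both `T₁` and `I − T₁`, where
`T₁ = w₁K₅⁺ + w₂L₃⁺ + w₃K₁⁺ + w₄K₃⁻ + w₅L₃⁻`, are positive semidefinite, then
`0 ≤ (10w₁ + 6w₂ − w₃)/12 ≤ 1` and `0 ≤ (w₃ + 2(w₄ + w₅))/4 ≤ 1`. -/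

theorem stmt18 (w1 w2 w3 w4 w5 : ℝ)
    (T1 : Matrix (Q × Q) (Q × Q) ℂ)
    (hT1 : T1 = (w1 : ℂ) • K5 + (w2 : ℂ) • L3p + (w3 : ℂ) • K1 +
      (w4 : ℂ) • K3m + (w5 : ℂ) • L3m)
    (hpt : (ptB T1).PosSemidef) (hpt' : (ptB (1 - T1)).PosSemidef) :
    (0 ≤ (10 * w1 + 6 * w2 - w3) / 12 ∧ (10 * w1 + 6 * w2 - w3) / 12 ≤ 1) ∧
    (0 ≤ (w3 + 2 * (w4 + w5)) / 4 ∧ (w3 + 2 * (w4 + w5)) / 4 ≤ 1) := by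
  set a1 : Q × Q := (((0:Fin 2),(1:Fin 2)),((0:Fin 2),(1:Fin 2))) with ha1
  set b1 : Q × Q := (((1:Fin 2),(0:Fin 2)),((1:Fin 2),(0:Fin 2))) with hb1
  set a2 : Q × Q := (((0:Fin 2),(1:Fin 2)),((1:Fin 2),(0:Fin 2))) with ha2
  set b2 : Q × Q := (((1:Fin 2),(0:Fin 2)),((0:Fin 2),(1:Fin 2))) with hb2
  have key1 : (ptB T1) a1 a1 - (ptB T1) a1 b1 - (ptB T1) b1 a1 + (ptB T1) b1 b1
      = (((10 * w1 + 6 * w2 - w3) / 6 : ℝ) : ℂ) := by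
    subst hT1
    simp only [ptB, Matrix.of_apply, Matrix.add_apply, Matrix.smul_apply, K5, L3p, K1, K3m, L3m,
      outer, vecMulVec_apply, Pi.star_apply, Pi.add_apply, Pi.sub_apply, Pi.smul_apply,
      smul_eq_mul, e_eq, ha1, hb1]
    norm_num [bz, ket, Prod.ext_iff, Fin.ext_iff]
    ring
  have key2 : (ptB T1) a2 a2 - (ptB T1) a2 b2 - (ptB T1) b2 a2 + (ptB T1) b2 b2
      = (((w3 + 2 * (w4 + w5)) / 2 : ℝ) : ℂ) := by
    subst hT1
    simp only [ptB, Matrix.of_apply, Matrix.add_apply, Matrix.smul_apply, K5, L3p, K1, K3m, L3m,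
      outer, vecMulVec_apply, Pi.star_apply, Pi.add_apply, Pi.sub_apply, Pi.smul_apply,
      smul_eq_mul, e_eq, ha2, hb2]
    norm_num [bz, ket, Prod.ext_iff, Fin.ext_iff]
    linear_combination (-(w4:ℂ) - (w5:ℂ)) * Complex.I_sq
  have hone : ∀ a b : Q × Q, a ≠ b →
      (1 : Matrix (Q × Q) (Q × Q) ℂ) a a - (1:Matrix (Q×Q) (Q×Q) ℂ) a b - (1:Matrix (Q×Q) (Q×Q) ℂ) b a + (1:Matrix (Q×Q) (Q×Q) ℂ) b b = 2 := by
    intro a b hab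
    simp [Matrix.one_apply, hab, hab.symm]
    ring
  have hab1 : a1 ≠ b1 := by simp [ha1, hb1]
  have hab2 : a2 ≠ b2 := by simp [ha2, hb2]
  have h1 := hpt.dotProduct_mulVec_nonneg ((Pi.single a1 (1:ℂ) : (Q × Q) → ℂ) - Pi.single b1 (1:ℂ))
  have h2 := hpt'.dotProduct_mulVec_nonneg ((Pi.single a1 (1:ℂ) : (Q × Q) → ℂ) - Pi.single b1 (1:ℂ))
  have h3 := hpt.dotProduct_mulVec_nonneg ((Pi.single a2 (1:ℂ) : (Q × Q) → ℂ) - Pi.single b2 (1:ℂ))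
  have h4 := hpt'.dotProduct_mulVec_nonneg ((Pi.single a2 (1:ℂ) : (Q × Q) → ℂ) - Pi.single b2 (1:ℂ))
  rw [quadform, key1] at h1
  rw [quadform, key2] at h3
  rw [ptB_sub, ptB_one] at h2 h4
  rw [quadform] at h2 h4
  simp only [Matrix.sub_apply] at h2 h4
  have e2 : ((1:Matrix (Q×Q) (Q×Q) ℂ) a1 a1 - (ptB T1) a1 a1) - ((1:Matrix (Q×Q) (Q×Q) ℂ) a1 b1 - (ptB T1) a1 b1)
      - ((1:Matrix (Q×Q) (Q×Q) ℂ) b1 a1 - (ptB T1) b1 a1) + ((1:Matrix (Q×Q) (Q×Q) ℂ) b1 b1 - (ptB T1) b1 b1)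
      = ((2 - (10 * w1 + 6 * w2 - w3) / 6 : ℝ) : ℂ) := by
    have h := hone a1 b1 hab1
    push_cast at key1 ⊢
    linear_combination h - key1
  have e4 : ((1:Matrix (Q×Q) (Q×Q) ℂ) a2 a2 - (ptB T1) a2 a2) - ((1:Matrix (Q×Q) (Q×Q) ℂ) a2 b2 - (ptB T1) a2 b2)
      - ((1:Matrix (Q×Q) (Q×Q) ℂ) b2 a2 - (ptB T1) b2 a2) + ((1:Matrix (Q×Q) (Q×Q) ℂ) b2 b2 - (ptB T1) b2 b2)
      = ((2 - (w3 + 2 * (w4 + w5)) / 2 : ℝ) : ℂ) := by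
    have h := hone a2 b2 hab2
    push_cast at key2 ⊢
    linear_combination h - key2
  rw [e2] at h2
  rw [e4] at h4
  rw [Complex.zero_le_real] at h1 h2 h3 h4
  refine ⟨⟨by linarith, by linarith⟩, by linarith, by linarith⟩
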